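/- The Laplacian matrix of any weighted signed forest with c connected components has nullity exactly c. -/

import Mathlib

open scoped Classical
open Polynomial

namespace SGPaper

/-- A weighted signed graph on `n` vertices, given by its symmetric hollow
matrix of edge weights (a nonzero entry `w i j` is the weight of the edge `ij`;
positive edges have positive weight, negative edges negative weight). -/
structure WSG (n : ℕ) where
  w : Matrix (Fin n) (Fin n) ℝ
  symm : w.IsSymm
  loopless : ∀ i, w i i = 0

variable {n : ℕ}

/-- The underlying simple graph. -/
def WSG.graph (Γ : WSG n) : SimpleGraph (Fin n) :=
  SimpleGraph.fromRel (fun i j => Γ.w i j ≠ 0)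

/-- The spanning subgraph of positive edges. -/
def WSG.posGraph (Γ : WSG n) : SimpleGraph (Fin n) :=
  SimpleGraph.fromRel (fun i j => 0 < Γ.w i j)

/-- The spanning subgraph of negative edges. -/
def WSG.negGraph (Γ : WSG n) : SimpleGraph (Fin n) :=
  SimpleGraph.fromRel (fun i j => Γ.w i j < 0)

/-- Number of connected components of a graph. -/
noncomputable def comps {V : Type*} (G : SimpleGraph V) : ℕ :=
  Nat.card G.ConnectedComponent

/-- Weighted Laplacian `L = A - D`. -/
def WSG.lap (Γ : WSG n) : Matrix (Fin n) (Fin n) ℝ :=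
  Γ.w - Matrix.diagonal (fun i => ∑ j, Γ.w i j)

theorem WSG.lap_isHermitian (Γ : WSG n) : Γ.lap.IsHermitian := by
  have h : Γ.lap.IsSymm := Γ.symm.sub (Matrix.isSymm_diagonal _)
  show Γ.lap.conjTranspose = Γ.lap
  ext i j
  simpa [Matrix.conjTranspose_apply] using congrFun (congrFun h i) j

/-- Number of positive eigenvalues of the Laplacian. -/
noncomputable def WSG.nPos (Γ : WSG n) : ℕ :=
  (Finset.univ.filter fun i => 0 < Γ.lap_isHermitian.eigenvalues i).card

/-- Number of negative eigenvalues of the Laplacian. -/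
noncomputable def WSG.nNeg (Γ : WSG n) : ℕ :=
  (Finset.univ.filter fun i => Γ.lap_isHermitian.eigenvalues i < 0).card

/-- Multiplicity of `0` as an eigenvalue of the Laplacian. -/
noncomputable def WSG.nZero (Γ : WSG n) : ℕ :=
  (Finset.univ.filter fun i => Γ.lap_isHermitian.eigenvalues i = 0).card

/-- The Laplacian inertia `(n₊, n₋, n₀)`. -/
noncomputable def WSG.inertia (Γ : WSG n) : ℕ × ℕ × ℕ := (Γ.nPos, Γ.nNeg, Γ.nZero)

lemma WSG.w_symm (Γ : WSG n) (i j : Fin n) : Γ.w j i = Γ.w i j := Γ.symm.apply i j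

lemma WSG.adj_iff (Γ : WSG n) {i j : Fin n} :
    Γ.graph.Adj i j ↔ i ≠ j ∧ Γ.w i j ≠ 0 := by
  constructor
  · rintro ⟨hne, h | h⟩
    · exact ⟨hne, h⟩
    · exact ⟨hne, by rwa [Γ.w_symm] at h⟩
  · rintro ⟨hne, h⟩; exact ⟨hne, Or.inl h⟩

lemma WSG.mulVec_lap (Γ : WSG n) (x : Fin n → ℝ) (k : Fin n) :
    Γ.lap.mulVec x k = ∑ l, Γ.w k l * (x l - x k) := by
  rw [WSG.lap, Matrix.sub_mulVec]
  simp only [Pi.sub_apply, Matrix.mulVec_diagonal, Matrix.mulVec, dotProduct,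
    mul_sub, Finset.sum_sub_distrib, Matrix.diagonal_apply, ite_mul, zero_mul,
    Finset.sum_ite_eq, Finset.mem_univ, if_true, Finset.sum_mul]

/-- Core lemma: in a forest, kernel vectors are constant on edges. -/
lemma WSG.ker_adj (Γ : WSG n) (hforest : Γ.graph.IsAcyclic)
    {x : Fin n → ℝ} (hx : Γ.lap.mulVec x = 0) {i j : Fin n}
    (hadj : Γ.graph.Adj i j) : x i = x j := by
  classical
  by_contra hne
  set G' : SimpleGraph (Fin n) := Γ.graph \ SimpleGraph.fromEdgeSet {s(i, j)} with hG'
  have hbridge : ¬ G'.Reachable i j := by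
    have := (SimpleGraph.isAcyclic_iff_forall_adj_isBridge.mp hforest) hadj
    exact SimpleGraph.isBridge_iff.mp this
  set S : Finset (Fin n) := Finset.univ.filter (fun k => G'.Reachable i k) with hS
  have hiS : i ∈ S := Finset.mem_filter.mpr ⟨Finset.mem_univ i, SimpleGraph.Reachable.refl i⟩
  have hjS : j ∉ S := by simp [hS]; exact hbridge
  -- any k ∈ S, l ∉ S with w k l ≠ 0 must be (i,j)
  have hcross : ∀ k ∈ S, ∀ l ∉ S, Γ.w k l ≠ 0 → k = i ∧ l = j := by
    intro k hk l hl hw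
    have hkl : k ≠ l := by rintro rfl; exact hl hk
    have hadjkl : Γ.graph.Adj k l := Γ.adj_iff.mpr ⟨hkl, hw⟩
    by_cases he : s(k, l) = s(i, j)
    · rcases Sym2.eq_iff.mp he with ⟨rfl, rfl⟩ | ⟨rfl, rfl⟩
      · exact ⟨rfl, rfl⟩
      · exact (hl hiS).elim
    · exfalso
      have hG'adj : G'.Adj k l := by
        simp only [hG', SimpleGraph.sdiff_adj, SimpleGraph.fromEdgeSet_adj]
        exact ⟨hadjkl, by simp [he]⟩
      have hkreach : G'.Reachable i k := by simpa [hS] using hk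
      exact hl (by simp [hS]; exact hkreach.trans hG'adj.reachable)
  -- sum of (L x)_k over k ∈ S is zero
  have hsum : ∑ k ∈ S, Γ.lap.mulVec x k = 0 := by
    rw [hx]; simp
  rw [Finset.sum_congr rfl (fun k _ => Γ.mulVec_lap x k)] at hsum
  -- split inner sum over S and Sᶜ
  have hsplit : ∀ k, ∑ l, Γ.w k l * (x l - x k)
      = (∑ l ∈ S, Γ.w k l * (x l - x k)) + ∑ l ∈ Sᶜ, Γ.w k l * (x l - x k) := by
    intro k; rw [Finset.sum_add_sum_compl]
  rw [Finset.sum_congr rfl (fun k _ => hsplit k), Finset.sum_add_distrib] at hsum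
  have h1 : ∑ k ∈ S, ∑ l ∈ S, Γ.w k l * (x l - x k) = 0 := by
    have := Finset.sum_comm (s := S) (t := S) (f := fun k l => Γ.w k l * (x l - x k))
    have hneg : ∀ k ∈ S, ∀ l ∈ S, Γ.w l k * (x k - x l) = -(Γ.w k l * (x l - x k)) := by
      intro k _ l _; rw [Γ.w_symm]; ring
    have : ∑ k ∈ S, ∑ l ∈ S, Γ.w k l * (x l - x k)
        = -∑ k ∈ S, ∑ l ∈ S, Γ.w k l * (x l - x k) := by
      nth_rewrite 1 [Finset.sum_comm]
      rw [← Finset.sum_neg_distrib]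
      apply Finset.sum_congr rfl; intro k hk
      rw [← Finset.sum_neg_distrib]
      apply Finset.sum_congr rfl; intro l hl
      exact hneg k hk l hl
    linarith
  have h2 : ∑ k ∈ S, ∑ l ∈ Sᶜ, Γ.w k l * (x l - x k) = Γ.w i j * (x j - x i) := by
    rw [Finset.sum_eq_single i]
    · rw [Finset.sum_eq_single j]
      · intro l hl hlj
        by_cases hw : Γ.w i l = 0
        · simp [hw]
        · exact absurd ((hcross i hiS l (by simpa using hl) hw).2) hlj
      · intro hj
        exact (hj (Finset.mem_compl.mpr hjS)).elim
    · intro k hk hki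
      apply Finset.sum_eq_zero
      intro l hl
      by_cases hw : Γ.w k l = 0
      · simp [hw]
      · exact absurd (hcross k hk l (by simpa using hl) hw).1 hki
    · intro hi; exact (hi hiS).elim
  rw [h1, h2, zero_add] at hsum
  have hwij : Γ.w i j ≠ 0 := (Γ.adj_iff.mp hadj).2
  have : x j - x i ≠ 0 := sub_ne_zero.mpr (Ne.symm hne)
  exact (mul_ne_zero hwij this) hsum
lemma WSG.ker_reachable (Γ : WSG n) (hforest : Γ.graph.IsAcyclic)
    {x : Fin n → ℝ} (hx : Γ.lap.mulVec x = 0) {i j : Fin n}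
    (h : Γ.graph.Reachable i j) : x i = x j := by
  obtain ⟨p⟩ := h
  induction p with
  | nil => rfl
  | cons hadj _ ih => exact (Γ.ker_adj hforest hx hadj).trans ih

lemma WSG.lap_mulVec_eq_zero (Γ : WSG n) {x : Fin n → ℝ}
    (h : ∀ i j, Γ.graph.Adj i j → x i = x j) : Γ.lap.mulVec x = 0 := by
  funext k
  rw [Γ.mulVec_lap]
  apply Finset.sum_eq_zero
  intro l _
  by_cases hw : Γ.w k l = 0
  · simp [hw]
  · by_cases hkl : k = l
    · subst hkl; simp
    · rw [← h k l (Γ.adj_iff.mpr ⟨hkl, hw⟩)]; simp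

/-- The Laplacian matrix of a weighted signed forest with `c` connected
components has nullity exactly `c`. -/
theorem forest_nullity {n : ℕ} (Γ : WSG n) (hforest : Γ.graph.IsAcyclic) :
    Module.finrank ℝ (LinearMap.ker (Matrix.toLin' Γ.lap)) = comps Γ.graph := by
  classical
  have hmem : ∀ x : Fin n → ℝ, x ∈ LinearMap.ker (Matrix.toLin' Γ.lap) ↔
      Γ.lap.mulVec x = 0 := by
    intro x; rw [LinearMap.mem_ker, Matrix.toLin'_apply]
  let e : LinearMap.ker (Matrix.toLin' Γ.lap) ≃ₗ[ℝ] (Γ.graph.ConnectedComponent → ℝ) :=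
  { toFun := fun x c => (x : Fin n → ℝ) c.out
    map_add' := fun a b => rfl
    map_smul' := fun r a => rfl
    invFun := fun f => ⟨fun v => f (Γ.graph.connectedComponentMk v), by
      rw [hmem]
      exact Γ.lap_mulVec_eq_zero (fun i j hadj => by
        rw [SimpleGraph.ConnectedComponent.eq.mpr hadj.reachable])⟩
    left_inv := by
      rintro ⟨x, hx⟩
      ext v
      exact Γ.ker_reachable hforest ((hmem x).mp hx)
        (SimpleGraph.ConnectedComponent.eq.mp (Quot.out_eq _))
    right_inv := by
      intro f
      funext c
      simp only
      exact congrArg f (Quot.out_eq c) }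
  rw [LinearEquiv.finrank_eq e, Module.finrank_pi, comps, Nat.card_eq_fintype_card]


end SGPaper
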